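/- arXiv:1908.03255 — 4 statements merged into one kernel-verified Lean document; each statement's English description precedes it below -/
import Mathlib

section
/- Let H₁ and H₂ be complex Hilbert spaces, let D₁ ⊆ H₁ and D₂ ⊆ H₂ be subspaces, let Q₁ and Q₂ be nonnegative Hermitian sesquilinear forms with domains D₁ and D₂ respectively, and let T : D₁ → D₂ be a linear map. Let k be a positive integer such that D₁ contains a k-dimensional subspace (so λ_k(Q₁, D₁) < ∞), and let α_k, β_k be real numbers with 0 < α_k < 1/(2k) and β_k > 0. Suppose that for every k-dimensional subspace L ⊆ D₁ and every u ∈ L one has ‖Tu‖²_{H₂} ≥ (1 − kα_k)·‖u‖²_{H₁} and Q₂(Tu, Tu) ≤ Q₁(u, u) + kβ_k·‖u‖²_{H₁}. Then λ_k(Q₂, D₂) ≤ λ_k(Q₁, D₁) + 2k(α_k·λ_k(Q₁, D₁) + β_k). -/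
open scoped ComplexInnerProductSpace ENNReal

/-- The supremum of the Rayleigh quotient `Q(u,u)/‖u‖²` over nonzero `u` in a subspace `L`. -/
noncomputable def rayleighSup {H : Type*} [NormedAddCommGroup H] [InnerProductSpace ℂ H]
    (Q : H → H → ℂ) (L : Submodule ℂ H) : ℝ≥0∞ :=
  ⨆ u ∈ {u : H | u ∈ L ∧ u ≠ 0}, ENNReal.ofReal ((Q u u).re / ‖u‖ ^ 2)

/-- The k-th variational eigenvalue of a form `Q` with domain `D`:
the infimum, over all `k`-dimensional subspaces `L ⊆ D`, of the sup of the Rayleigh quotient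
over `L`; the infimum of the empty set is `+∞`. -/
noncomputable def varEig {H : Type*} [NormedAddCommGroup H] [InnerProductSpace ℂ H]
    (Q : H → H → ℂ) (D : Submodule ℂ H) (k : ℕ) : ℝ≥0∞ :=
  ⨅ L ∈ {L : Submodule ℂ H | L ≤ D ∧ Module.finrank ℂ ↥L = k}, rayleighSup Q L

/-- `Q` is a nonnegative Hermitian sesquilinear form with domain the subspace `D`:
it is linear in the first argument (and hence, being Hermitian, conjugate-linear in the
second), Hermitian, and `Q(u,u) ≥ 0` on `D`. -/
structure IsNonnegHermitianFormOn {H : Type*} [NormedAddCommGroup H] [InnerProductSpace ℂ H]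
    (Q : H → H → ℂ) (D : Submodule ℂ H) : Prop where
  add_left : ∀ u v w, u ∈ D → v ∈ D → w ∈ D → Q (u + v) w = Q u w + Q v w
  smul_left : ∀ (c : ℂ) (u v : H), u ∈ D → v ∈ D → Q (c • u) v = c * Q u v
  hermitian : ∀ u v, u ∈ D → v ∈ D → Q u v = starRingEnd ℂ (Q v u)
  nonneg : ∀ u, u ∈ D → 0 ≤ (Q u u).re


set_option maxHeartbeats 1000000 in
/-- The variant of Lemma 2.2 of the paper (Remark 2, condition (12)): comparing variational
eigenvalues via a transition operator `T`, under the subspace hypothesis. -/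
theorem varEig_le_of_transition_subspace
    {H₁ H₂ : Type*} [NormedAddCommGroup H₁] [InnerProductSpace ℂ H₁] [CompleteSpace H₁]
    [NormedAddCommGroup H₂] [InnerProductSpace ℂ H₂] [CompleteSpace H₂]
    (D₁ : Submodule ℂ H₁) (D₂ : Submodule ℂ H₂)
    (Q₁ : H₁ → H₁ → ℂ) (Q₂ : H₂ → H₂ → ℂ)
    (hQ₁ : IsNonnegHermitianFormOn Q₁ D₁) (hQ₂ : IsNonnegHermitianFormOn Q₂ D₂)
    (T : D₁ →ₗ[ℂ] H₂) (hT : ∀ u : D₁, T u ∈ D₂)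
    (k : ℕ) (hk : 0 < k)
    (hdim : ∃ L : Submodule ℂ H₁, L ≤ D₁ ∧ Module.finrank ℂ ↥L = k)
    (αk βk : ℝ) (hα : 0 < αk) (hα' : αk < 1 / (2 * k)) (hβ : 0 < βk)
    (hyp : ∀ L : Submodule ℂ H₁, L ≤ D₁ → Module.finrank ℂ ↥L = k →
      ∀ (u : H₁) (hu : u ∈ D₁), u ∈ L →
        (1 - k * αk) * ‖u‖ ^ 2 ≤ ‖T ⟨u, hu⟩‖ ^ 2 ∧
        (Q₂ (T ⟨u, hu⟩) (T ⟨u, hu⟩)).re ≤ (Q₁ u u).re + k * βk * ‖u‖ ^ 2) :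
    varEig Q₂ D₂ k ≤ varEig Q₁ D₁ k +
      ENNReal.ofReal (2 * k * (αk * (varEig Q₁ D₁ k).toReal + βk)) := by
  
  set lam := varEig Q₁ D₁ k with hlam
  by_cases hne : lam = ⊤
  · rw [hne]; exact le_top.trans_eq (by simp)
  have hk' : (0:ℝ) < k := by exact_mod_cast hk
  have h2ka : 2 * (k:ℝ) * αk < 1 := by
    rw [lt_div_iff₀ (by positivity)] at hα'
    linarith
  have h1ka : (0:ℝ) < 1 - k * αk := by nlinarith
  have hlam0 : 0 ≤ lam.toReal := ENNReal.toReal_nonneg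
  apply ENNReal.le_of_forall_pos_le_add
  intro ε hε _
  have hεR : (0:ℝ) < (ε:ℝ) := hε
  set εr : ℝ := (ε:ℝ) / (1 + 2 * k * αk) with hεr_def
  have hεr : 0 < εr := by positivity
  set M : ℝ := lam.toReal + εr with hM_def
  have hM0 : 0 ≤ M := by positivity
  -- choose a near-optimal subspace L
  have hlt : varEig Q₁ D₁ k < lam + ENNReal.ofReal εr := by
    rw [← hlam]
    exact ENNReal.lt_add_right hne (by simp [ENNReal.ofReal_pos.2 hεr, ne_of_gt])
  rw [varEig] at hlt
  simp only [iInf_lt_iff, Set.mem_setOf_eq] at hlt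
  obtain ⟨L, ⟨hLD, hLk⟩, hLlt⟩ := hlt
  -- Rayleigh quotients on L are bounded by M
  have hM : ∀ u : H₁, u ∈ L → u ≠ 0 → (Q₁ u u).re / ‖u‖ ^ 2 ≤ M := by
    intro u huL hu0
    have h1 : ENNReal.ofReal ((Q₁ u u).re / ‖u‖ ^ 2) ≤ rayleighSup Q₁ L :=
      le_iSup₂ (f := fun (u : H₁) (_ : u ∈ {u : H₁ | u ∈ L ∧ u ≠ 0}) =>
        ENNReal.ofReal ((Q₁ u u).re / ‖u‖ ^ 2)) u ⟨huL, hu0⟩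
    have h2 := h1.trans hLlt.le
    rw [ENNReal.ofReal_le_iff_le_toReal (by simp [hne]),
      ENNReal.toReal_add hne (by simp), ENNReal.toReal_ofReal hεr.le] at h2
    exact h2
  have : FiniteDimensional ℂ ↥L := FiniteDimensional.of_finrank_pos (hLk ▸ hk)
  -- the transported subspace
  set S : ↥L →ₗ[ℂ] H₂ := T ∘ₗ Submodule.inclusion hLD with hS_def
  have hSval : ∀ u : ↥L, S u = T ⟨u.1, hLD u.2⟩ := fun u => rfl
  have hinj : Function.Injective S := by
    rw [← LinearMap.ker_eq_bot, LinearMap.ker_eq_bot']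
    intro u hu
    by_contra h0
    have hu1 : (u:H₁) ≠ 0 := fun h => h0 (Subtype.ext h)
    have hnu : (0:ℝ) < ‖(u:H₁)‖ ^ 2 := pow_pos (norm_pos_iff.2 hu1) 2
    have h1 := (hyp L hLD hLk u.1 (hLD u.2) u.2).1
    rw [← hSval u, hu] at h1
    simp only [norm_zero] at h1
    nlinarith
  set L₂ : Submodule ℂ H₂ := LinearMap.range S with hL₂_def
  have hL₂D : L₂ ≤ D₂ := by
    rintro v ⟨u, rfl⟩
    exact hT _
  have hfin₂ : Module.finrank ℂ ↥L₂ = k := by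
    rw [hL₂_def, LinearMap.finrank_range_of_inj hinj, hLk]
  have step1 : varEig Q₂ D₂ k ≤ rayleighSup Q₂ L₂ :=
    iInf₂_le L₂ ⟨hL₂D, hfin₂⟩
  have step2 : rayleighSup Q₂ L₂ ≤ ENNReal.ofReal (M + 2 * k * (αk * M + βk)) := by
    refine iSup₂_le ?_
    rintro v ⟨hvL₂, hv0⟩
    obtain ⟨u, rfl⟩ := hvL₂
    have hu0 : (u:H₁) ≠ 0 := by
      intro h
      exact hv0 (by rw [show u = 0 from Subtype.ext h, map_zero])
    apply ENNReal.ofReal_le_ofReal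
    have hyp1 := (hyp L hLD hLk u.1 (hLD u.2) u.2).1
    have hyp2 := (hyp L hLD hLk u.1 (hLD u.2) u.2).2
    rw [← hSval u] at hyp1 hyp2
    have hMu := hM u.1 u.2 hu0
    have hun : (0:ℝ) < ‖(u:H₁)‖ ^ 2 := pow_pos (norm_pos_iff.2 hu0) 2
    have hQ1nn : 0 ≤ (Q₁ u u).re := hQ₁.nonneg _ (hLD u.2)
    have hQ1M : (Q₁ (u:H₁) (u:H₁)).re ≤ M * ‖(u:H₁)‖ ^ 2 := by
      rw [div_le_iff₀ hun] at hMu; linarith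
    have hv2 : (0:ℝ) < ‖S u‖ ^ 2 := by nlinarith
    calc (Q₂ (S u) (S u)).re / ‖S u‖ ^ 2
        ≤ ((M + k * βk) * ‖(u:H₁)‖ ^ 2) / ((1 - k * αk) * ‖(u:H₁)‖ ^ 2) := by
          apply div_le_div₀ (mul_nonneg (by nlinarith) hun.le) (by nlinarith)
            (by positivity) hyp1
      _ = (M + k * βk) / (1 - k * αk) := by
          rw [mul_div_mul_right _ _ (ne_of_gt hun)]
      _ ≤ M + 2 * k * (αk * M + βk) := by
          rw [div_le_iff₀ h1ka]
          nlinarith [mul_nonneg (mul_nonneg hk'.le (sub_nonneg.2 h2ka.le))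
            (add_nonneg (mul_nonneg hα.le hM0) hβ.le)]
  have hC : M + 2 * k * (αk * M + βk)
      = lam.toReal + (2 * k * (αk * lam.toReal + βk) + (ε:ℝ)) := by
    have h1 : (1:ℝ) + 2 * k * αk ≠ 0 := by positivity
    rw [hM_def, hεr_def]
    field_simp
    ring
  refine (step1.trans step2).trans ?_
  rw [hC, ENNReal.ofReal_add hlam0 (by positivity),
    ENNReal.ofReal_add (by positivity) hεR.le,
    ENNReal.ofReal_toReal hne, ENNReal.ofReal_coe_nnreal, ← add_assoc]
end

section
/- Let H be a complex Hilbert space, let D' ⊆ D be subspaces of H, let Q be a nonnegative Hermitian sesquilinear form with domain D, and let P be a nonnegative Hermitian sesquilinear form with domain D'. Suppose D' is dense in D with respect to the graph norm ‖u‖_Q = (‖u‖² + Q(u,u))^{1/2}. For t > 0 define the form Q^t on D' by Q^t(u,v) = Q(u,v) + t·P(u,v). Then for every positive integer k, lim_{t→0⁺} λ_k(Q^t, D') = λ_k(Q, D) (as elements of [0,∞]; in particular the limit exists). -/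
open scoped ComplexInnerProductSpace ENNReal

set_option linter.unusedSectionVars false

namespace IsNonnegHermitianFormOn

variable {H : Type*} [NormedAddCommGroup H] [InnerProductSpace ℂ H]
  {Q : H → H → ℂ} {D : Submodule ℂ H}

lemma add_right (h : IsNonnegHermitianFormOn Q D) (u v w : H) (hu : u ∈ D) (hv : v ∈ D)
    (hw : w ∈ D) : Q u (v + w) = Q u v + Q u w := by
  rw [h.hermitian u (v+w) hu (D.add_mem hv hw), h.add_left v w u hv hw hu, map_add,
    ← h.hermitian u v hu hv, ← h.hermitian u w hu hw]

lemma smul_right (h : IsNonnegHermitianFormOn Q D) (c : ℂ) (u v : H) (hu : u ∈ D)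
    (hv : v ∈ D) : Q u (c • v) = starRingEnd ℂ c * Q u v := by
  rw [h.hermitian u (c • v) hu (D.smul_mem c hv), h.smul_left c v u hv hu, map_mul,
    ← h.hermitian u v hu hv]

lemma zero_left (h : IsNonnegHermitianFormOn Q D) (v : H) (hv : v ∈ D) : Q 0 v = 0 := by
  have := h.smul_left 0 0 v D.zero_mem hv
  simpa using this

/-- Cauchy–Schwarz (real part) for a nonnegative Hermitian form. -/
lemma re_le_sqrt_mul_sqrt (h : IsNonnegHermitianFormOn Q D) (u v : H) (hu : u ∈ D)
    (hv : v ∈ D) :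
    (Q u v).re ≤ Real.sqrt (Q u u).re * Real.sqrt (Q v v).re := by
  have key : ∀ s : ℝ, 0 ≤ (Q v v).re * (s * s) + (2 * (Q u v).re) * s + (Q u u).re := by
    intro s
    have hsv : (s : ℂ) • v ∈ D := D.smul_mem _ hv
    have hmem : u + (s : ℂ) • v ∈ D := D.add_mem hu hsv
    have h0 := h.nonneg _ hmem
    have hexp : Q (u + (s : ℂ) • v) (u + (s : ℂ) • v)
        = Q u u + (s : ℂ) * Q u v + (s : ℂ) * Q v u + ((s : ℂ) * (s : ℂ)) * Q v v := by
      rw [h.add_left u ((s : ℂ) • v) _ hu hsv hmem,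
        h.add_right u u ((s : ℂ) • v) hu hu hsv,
        h.add_right _ u ((s : ℂ) • v) hsv hu hsv,
        h.smul_left _ v u hv hu, h.smul_left _ v ((s : ℂ) • v) hv hsv,
        h.smul_right _ u v hu hv, h.smul_right _ v v hv hv, Complex.conj_ofReal]
      ring
    rw [hexp] at h0
    have hre : (Q v u).re = (Q u v).re := by
      rw [h.hermitian v u hv hu, Complex.conj_re]
    simp only [Complex.add_re, Complex.mul_re, Complex.ofReal_re, Complex.ofReal_im,
      Complex.mul_im] at h0
    rw [hre] at h0
    ring_nf at h0 ⊢
    linarith [h0]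
  have hd := discrim_le_zero key
  have ha0 : 0 ≤ (Q v v).re := h.nonneg v hv
  have hc0 : 0 ≤ (Q u u).re := h.nonneg u hu
  rw [discrim] at hd
  have hb2 : (Q u v).re ^ 2 ≤ (Q u u).re * (Q v v).re := by nlinarith [hd]
  calc (Q u v).re ≤ |(Q u v).re| := le_abs_self _
    _ = Real.sqrt ((Q u v).re ^ 2) := (Real.sqrt_sq_eq_abs _).symm
    _ ≤ Real.sqrt ((Q u u).re * (Q v v).re) := Real.sqrt_le_sqrt hb2
    _ = Real.sqrt (Q u u).re * Real.sqrt (Q v v).re := Real.sqrt_mul hc0 _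

/-- The seminorm associated to the form. -/
noncomputable def snorm (Q : H → H → ℂ) (w : H) : ℝ := Real.sqrt (Q w w).re

lemma snorm_nonneg (w : H) : 0 ≤ snorm Q w := Real.sqrt_nonneg _

lemma snorm_sq (h : IsNonnegHermitianFormOn Q D) (u : H) (hu : u ∈ D) :
    snorm Q u ^ 2 = (Q u u).re := Real.sq_sqrt (h.nonneg u hu)

lemma snorm_add_le (h : IsNonnegHermitianFormOn Q D) (u v : H) (hu : u ∈ D) (hv : v ∈ D) :
    snorm Q (u + v) ≤ snorm Q u + snorm Q v := by
  have hmem : u + v ∈ D := D.add_mem hu hv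
  have hexp : (Q (u+v) (u+v)).re = (Q u u).re + 2 * (Q u v).re + (Q v v).re := by
    rw [h.add_left u v _ hu hv hmem, h.add_right u u v hu hu hv, h.add_right v u v hv hu hv]
    have hre : (Q v u).re = (Q u v).re := by
      rw [h.hermitian v u hv hu, Complex.conj_re]
    simp only [Complex.add_re]
    rw [hre]; ring
  have hcs := h.re_le_sqrt_mul_sqrt u v hu hv
  have h1 : (Q (u+v) (u+v)).re ≤ (snorm Q u + snorm Q v) ^ 2 := by
    rw [hexp]
    have h2 := h.snorm_sq u hu
    have h3 := h.snorm_sq v hv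
    unfold snorm at *
    nlinarith
  calc snorm Q (u+v) = Real.sqrt ((Q (u+v) (u+v)).re) := rfl
    _ ≤ Real.sqrt ((snorm Q u + snorm Q v) ^ 2) := Real.sqrt_le_sqrt h1
    _ = |snorm Q u + snorm Q v| := Real.sqrt_sq_eq_abs _
    _ = snorm Q u + snorm Q v := abs_of_nonneg (add_nonneg (Real.sqrt_nonneg _) (Real.sqrt_nonneg _))

lemma snorm_smul (h : IsNonnegHermitianFormOn Q D) (c : ℂ) (u : H) (hu : u ∈ D) :
    snorm Q (c • u) = ‖c‖ * snorm Q u := by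
  have hQ : Q (c • u) (c • u) = (c * starRingEnd ℂ c) * Q u u := by
    rw [h.smul_left c u _ hu (D.smul_mem c hu), h.smul_right c u u hu hu]; ring
  unfold snorm
  rw [hQ, Complex.mul_conj]
  rw [show ((Complex.normSq c : ℂ) * Q u u).re = Complex.normSq c * (Q u u).re from
    Complex.re_ofReal_mul _ _, Real.sqrt_mul (Complex.normSq_nonneg c)]
  have hns : Real.sqrt (Complex.normSq c) = ‖c‖ := by
    rw [show Complex.normSq c = ‖c‖^2 from by rw [Complex.normSq_eq_norm_sq],
      Real.sqrt_sq (norm_nonneg c)]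
  rw [hns]

lemma snorm_sum_le (h : IsNonnegHermitianFormOn Q D) {ι : Type*} (s : Finset ι) (c : ι → ℂ)
    (w : ι → H) (hw : ∀ i ∈ s, w i ∈ D) :
    snorm Q (∑ i ∈ s, c i • w i) ≤ ∑ i ∈ s, ‖c i‖ * snorm Q (w i) := by
  classical
  induction s using Finset.induction_on with
  | empty => simp [snorm, h.zero_left 0 D.zero_mem]
  | insert a s hnot ih =>
    have hws : ∀ i ∈ s, w i ∈ D := fun i hi => hw i (Finset.mem_insert_of_mem hi)
    have hsum : (∑ i ∈ s, c i • w i) ∈ D :=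
      Submodule.sum_mem _ fun i hi => D.smul_mem _ (hws i hi)
    rw [Finset.sum_insert hnot, Finset.sum_insert hnot]
    calc snorm Q (c a • w a + ∑ i ∈ s, c i • w i)
        ≤ snorm Q (c a • w a) + snorm Q (∑ i ∈ s, c i • w i) :=
          h.snorm_add_le _ _ (D.smul_mem _ (hw a (Finset.mem_insert_self a s))) hsum
      _ ≤ ‖c a‖ * snorm Q (w a) + ∑ i ∈ s, ‖c i‖ * snorm Q (w i) := by
          rw [h.snorm_smul _ _ (hw a (Finset.mem_insert_self a s))]
          exact add_le_add_right (ih hws) _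

end IsNonnegHermitianFormOn

section FinDim

variable {H : Type*} [NormedAddCommGroup H] [InnerProductSpace ℂ H]

/-- Coordinates w.r.t. a basis of a finite-dimensional submodule are norm-bounded. -/
lemma exists_coords_bound {n : ℕ} (L : Submodule ℂ H) [FiniteDimensional ℂ L]
    (b : Module.Basis (Fin n) ℂ L) :
    ∃ C : ℝ, 0 ≤ C ∧ ∀ x : L, ∑ i, ‖b.equivFun x i‖ ≤ C * ‖x‖ := by
  let φ : L →L[ℂ] (Fin n → ℂ) :=
    LinearMap.toContinuousLinearMap (b.equivFun : L ≃ₗ[ℂ] (Fin n → ℂ)).toLinearMap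
  refine ⟨n * ‖φ‖, by positivity, fun x => ?_⟩
  calc ∑ i, ‖b.equivFun x i‖ ≤ ∑ _i : Fin n, ‖φ x‖ :=
        Finset.sum_le_sum fun i _ => norm_le_pi_norm (φ x) i
    _ = n * ‖φ x‖ := by simp [Finset.sum_const, nsmul_eq_mul]
    _ ≤ n * (‖φ‖ * ‖x‖) := by
        have := φ.le_opNorm x
        have hn : (0:ℝ) ≤ n := Nat.cast_nonneg n
        nlinarith [this, norm_nonneg x, norm_nonneg φ]
    _ = n * ‖φ‖ * ‖x‖ := by ring

/-- A nonnegative Hermitian form is bounded on a finite-dimensional submodule of its domain. -/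
lemma exists_form_bound {Q : H → H → ℂ} {D : Submodule ℂ H}
    (h : IsNonnegHermitianFormOn Q D) (L : Submodule ℂ H) (hL : L ≤ D)
    [FiniteDimensional ℂ L] :
    ∃ C : ℝ, 0 ≤ C ∧ ∀ y ∈ L, (Q y y).re ≤ C * ‖y‖ ^ 2 := by
  classical
  set n := Module.finrank ℂ L with hn
  let b : Module.Basis (Fin n) ℂ L := Module.finBasisOfFinrankEq ℂ L rfl
  obtain ⟨C₀, hC₀, hco⟩ := exists_coords_bound L b
  set Mq : ℝ := ∑ i, IsNonnegHermitianFormOn.snorm Q ((b i : H)) with hMq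
  have hMq0 : 0 ≤ Mq := Finset.sum_nonneg fun i _ => Real.sqrt_nonneg _
  have hMqi : ∀ i, IsNonnegHermitianFormOn.snorm Q ((b i : H)) ≤ Mq := by
    intro i
    exact Finset.single_le_sum (f := fun i => IsNonnegHermitianFormOn.snorm Q ((b i : H)))
      (fun j _ => Real.sqrt_nonneg _) (Finset.mem_univ i)
  refine ⟨(Mq * C₀) ^ 2, by positivity, fun y hy => ?_⟩
  set x : L := ⟨y, hy⟩ with hx
  have hrepr : y = ∑ i, b.equivFun x i • ((b i : H)) := by
    have := b.sum_equivFun x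
    calc y = ((x : L) : H) := rfl
      _ = ((∑ i, b.equivFun x i • b i : L) : H) := by rw [this]
      _ = ∑ i, b.equivFun x i • ((b i : H)) := by
          push_cast [Submodule.coe_sum]
          rfl
  have hq : IsNonnegHermitianFormOn.snorm Q y ≤ Mq * C₀ * ‖y‖ := by
    conv_lhs => rw [hrepr]
    calc IsNonnegHermitianFormOn.snorm Q (∑ i, b.equivFun x i • ((b i : H)))
        ≤ ∑ i, ‖b.equivFun x i‖ * IsNonnegHermitianFormOn.snorm Q ((b i : H)) :=
          h.snorm_sum_le Finset.univ _ _ (fun i _ => hL (b i).2)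
      _ ≤ ∑ i, ‖b.equivFun x i‖ * Mq :=
          Finset.sum_le_sum fun i _ => mul_le_mul_of_nonneg_left (hMqi i) (norm_nonneg _)
      _ = Mq * ∑ i, ‖b.equivFun x i‖ := by rw [← Finset.sum_mul]; ring
      _ ≤ Mq * (C₀ * ‖x‖) := mul_le_mul_of_nonneg_left (hco x) hMq0
      _ = Mq * C₀ * ‖y‖ := by rw [Submodule.coe_norm]; ring
  have hsq := h.snorm_sq y (hL hy)
  have h0 : 0 ≤ IsNonnegHermitianFormOn.snorm Q y := Real.sqrt_nonneg _
  calc (Q y y).re = IsNonnegHermitianFormOn.snorm Q y ^ 2 := hsq.symm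
    _ ≤ (Mq * C₀ * ‖y‖) ^ 2 := by nlinarith [hq, h0]
    _ = (Mq * C₀) ^ 2 * ‖y‖ ^ 2 := by ring

end FinDim

section Key

variable {H : Type*} [NormedAddCommGroup H] [InnerProductSpace ℂ H]


private lemma div_mul_aux (a b s : ℝ) (ha : 0 ≤ a) (hb : 0 ≤ b) (hs : 0 ≤ s) :
    a / (b + 1) * (b * s) ≤ a * s := by
  rw [div_mul_eq_mul_div, div_le_iff₀ (by linarith)]
  nlinarith

open IsNonnegHermitianFormOn in
lemma key_approx {Q P : H → H → ℂ} {D D' : Submodule ℂ H} (hD : D' ≤ D)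
    (hQ : IsNonnegHermitianFormOn Q D) (hP : IsNonnegHermitianFormOn P D')
    (hdense : ∀ u ∈ D, ∀ ε : ℝ, 0 < ε →
      ∃ v ∈ D', ‖u - v‖ ^ 2 + (Q (u - v) (u - v)).re < ε ^ 2)
    (L : Submodule ℂ H) (hLD : L ≤ D) [FiniteDimensional ℂ L]
    (M ε : ℝ) (hM0 : 0 ≤ M) (hε : 0 < ε)
    (hM : ∀ u ∈ L, (Q u u).re ≤ M * ‖u‖ ^ 2) :
    ∃ t₀ : ℝ, 0 < t₀ ∧ ∃ L' : Submodule ℂ H, L' ≤ D' ∧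
      Module.finrank ℂ ↥L' = Module.finrank ℂ ↥L ∧
      ∀ t : ℝ, 0 < t → t ≤ t₀ → ∀ y ∈ L',
        (Q y y).re + t * (P y y).re ≤ (M + ε) * ‖y‖ ^ 2 := by
  classical
  -- choose η
  obtain ⟨η, hηf, hη2, hη0⟩ :
      ∃ η : ℝ, ((Real.sqrt M + η)/(1-η))^2 < M + ε/2 ∧ η < 1/2 ∧ 0 < η := by
    have hf : ContinuousAt (fun η : ℝ => ((Real.sqrt M + η)/(1-η))^2) 0 := by
      apply ContinuousAt.pow
      exact ContinuousAt.div (by fun_prop) (by fun_prop) (by norm_num)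
    have hf0 : ((Real.sqrt M + (0:ℝ))/(1-(0:ℝ)))^2 = M := by
      simp [Real.sq_sqrt hM0]
    have h1 : ∀ᶠ η in nhds (0:ℝ), ((Real.sqrt M + η)/(1-η))^2 < M + ε/2 :=
      Filter.Tendsto.eventually_lt_const (by rw [hf0]; linarith) hf.tendsto
    have h2 : ∀ᶠ η in nhds (0:ℝ), η < 1/2 := eventually_lt_nhds (by norm_num)
    have h3 : ∀ᶠ η in nhdsWithin (0:ℝ) (Set.Ioi 0),
        (((Real.sqrt M + η)/(1-η))^2 < M + ε/2 ∧ η < 1/2) ∧ 0 < η :=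
      Filter.Eventually.and ((h1.and h2).filter_mono nhdsWithin_le_nhds)
        (eventually_mem_nhdsWithin)
    obtain ⟨η, ⟨ha, hb⟩, hc⟩ := h3.exists
    exact ⟨η, ha, hb, hc⟩
  have hη1 : η < 1 := by linarith
  -- basis and coordinates
  set n := Module.finrank ℂ ↥L with hn
  let b : Module.Basis (Fin n) ℂ L := Module.finBasisOfFinrankEq ℂ L rfl
  obtain ⟨C₀, hC₀0, hco⟩ := exists_coords_bound L b
  set C : ℝ := C₀ + 1 with hC
  have hCpos : 0 < C := by linarith
  set δ : ℝ := η / C with hδdef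
  have hδ : 0 < δ := div_pos hη0 hCpos
  -- approximating vectors
  have hv : ∀ i : Fin n, ∃ w ∈ D',
      ‖(b i : H) - w‖ ^ 2 + (Q ((b i : H) - w) ((b i : H) - w)).re < δ ^ 2 :=
    fun i => hdense _ (hLD (b i).2) δ hδ
  choose v hvD' hvb using hv
  have hsubD : ∀ i : Fin n, (b i : H) - v i ∈ D :=
    fun i => D.sub_mem (hLD (b i).2) (hD (hvD' i))
  have hvnorm : ∀ i : Fin n, ‖(b i : H) - v i‖ ≤ δ := by
    intro i
    have h1 : ‖(b i : H) - v i‖ ^ 2 ≤ δ ^ 2 := by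
      have := hQ.nonneg _ (hsubD i)
      linarith [hvb i]
    nlinarith [norm_nonneg ((b i : H) - v i), hδ]
  have hvq : ∀ i : Fin n, snorm Q ((b i : H) - v i) ≤ δ := by
    intro i
    have h1 : (Q ((b i : H) - v i) ((b i : H) - v i)).re ≤ δ ^ 2 := by
      have := sq_nonneg ‖(b i : H) - v i‖
      linarith [hvb i]
    calc snorm Q ((b i : H) - v i) ≤ Real.sqrt (δ ^ 2) := Real.sqrt_le_sqrt h1
      _ = δ := by rw [Real.sqrt_sq hδ.le]
  -- the approximating map
  let T : L →ₗ[ℂ] H := b.constr ℂ v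
  have hrepr : ∀ x : L, (x : H) = ∑ i, b.equivFun x i • ((b i : H)) := by
    intro x
    conv_lhs => rw [← b.sum_equivFun x]
    push_cast [Submodule.coe_sum]
    rfl
  have hTx : ∀ x : L, T x = ∑ i, b.equivFun x i • v i :=
    fun x => b.constr_apply_fintype ℂ v x
  have hdiff : ∀ x : L, (x : H) - T x = ∑ i, b.equivFun x i • ((b i : H) - v i) := by
    intro x
    rw [hTx x]
    conv_lhs => rw [hrepr x]
    rw [← Finset.sum_sub_distrib]
    exact Finset.sum_congr rfl fun i _ => (smul_sub _ _ _).symm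
  have hcoordC : ∀ x : L, ∑ i, ‖b.equivFun x i‖ ≤ C * ‖x‖ := by
    intro x
    calc ∑ i, ‖b.equivFun x i‖ ≤ C₀ * ‖x‖ := hco x
      _ ≤ C * ‖x‖ := by
          have := norm_nonneg x
          nlinarith
  have hnormest : ∀ x : L, ‖(x : H) - T x‖ ≤ η * ‖x‖ := by
    intro x
    rw [hdiff x]
    calc ‖∑ i, b.equivFun x i • ((b i : H) - v i)‖
        ≤ ∑ i, ‖b.equivFun x i • ((b i : H) - v i)‖ := norm_sum_le _ _
      _ = ∑ i, ‖b.equivFun x i‖ * ‖(b i : H) - v i‖ := by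
          simp [norm_smul]
      _ ≤ ∑ i, ‖b.equivFun x i‖ * δ :=
          Finset.sum_le_sum fun i _ => mul_le_mul_of_nonneg_left (hvnorm i) (norm_nonneg _)
      _ = δ * ∑ i, ‖b.equivFun x i‖ := by rw [← Finset.sum_mul]; ring
      _ ≤ δ * (C * ‖x‖) := mul_le_mul_of_nonneg_left (hcoordC x) hδ.le
      _ = η * ‖x‖ := by
          rw [hδdef]; field_simp
  have hqest : ∀ x : L, snorm Q ((x : H) - T x) ≤ η * ‖x‖ := by
    intro x
    rw [hdiff x]
    calc snorm Q (∑ i, b.equivFun x i • ((b i : H) - v i))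
        ≤ ∑ i, ‖b.equivFun x i‖ * snorm Q ((b i : H) - v i) :=
          hQ.snorm_sum_le Finset.univ _ _ fun i _ => hsubD i
      _ ≤ ∑ i, ‖b.equivFun x i‖ * δ :=
          Finset.sum_le_sum fun i _ => mul_le_mul_of_nonneg_left (hvq i) (norm_nonneg _)
      _ = δ * ∑ i, ‖b.equivFun x i‖ := by rw [← Finset.sum_mul]; ring
      _ ≤ δ * (C * ‖x‖) := mul_le_mul_of_nonneg_left (hcoordC x) hδ.le
      _ = η * ‖x‖ := by
          rw [hδdef]; field_simp
  have hTlow : ∀ x : L, (1 - η) * ‖x‖ ≤ ‖T x‖ := by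
    intro x
    have h1 : ‖(x : H)‖ - ‖T x‖ ≤ ‖(x : H) - T x‖ := norm_sub_norm_le _ _
    have h2 := hnormest x
    have h3 : ‖(x : H)‖ = ‖x‖ := (Submodule.coe_norm x).symm
    linarith
  have hinj : Function.Injective T := by
    rw [injective_iff_map_eq_zero]
    intro x hx
    have := hTlow x
    rw [hx, norm_zero] at this
    have hx0 : ‖x‖ ≤ 0 := by nlinarith [norm_nonneg x]
    exact norm_eq_zero.mp (le_antisymm hx0 (norm_nonneg x))
  -- the approximating subspace
  refine ?_
  set L' : Submodule ℂ H := LinearMap.range T with hL'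
  have hL'D' : L' ≤ D' := by
    rintro y ⟨x, rfl⟩
    rw [hTx x]
    exact Submodule.sum_mem _ fun i _ => Submodule.smul_mem _ _ (hvD' i)
  have hrank : Module.finrank ℂ ↥L' = Module.finrank ℂ ↥L :=
    LinearMap.finrank_range_of_inj hinj
  haveI : FiniteDimensional ℂ ↥L' := by
    rw [hL']
    infer_instance
  obtain ⟨CP, hCP0, hCPb⟩ := exists_form_bound hP L' hL'D'
  refine ⟨(ε/2)/(CP + 1), by positivity, L', hL'D', hrank, ?_⟩
  intro t ht ht₀ y hy
  obtain ⟨x, rfl⟩ := hy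
  by_cases hx0 : x = 0
  · subst hx0
    rw [map_zero]
    have hQ0 : Q 0 0 = 0 := hQ.zero_left 0 D.zero_mem
    have hP0 : P 0 0 = 0 := hP.zero_left 0 D'.zero_mem
    rw [hQ0, hP0]
    simp
  · have hxpos : 0 < ‖x‖ := norm_pos_iff.mpr hx0
    have hTD : T x ∈ D := hD (hL'D' ⟨x, rfl⟩)
    have hxD : (x : H) ∈ D := hLD x.2
    -- bound on snorm Q (T x)
    have hq1 : snorm Q (T x) ≤ snorm Q ((x : H)) + snorm Q ((x : H) - T x) := by
      have habel : T x = (x : H) + (T x - (x : H)) := by abel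
      conv_lhs => rw [habel]
      have hmem2 : T x - (x : H) ∈ D := D.sub_mem hTD hxD
      calc snorm Q ((x : H) + (T x - (x : H)))
          ≤ snorm Q ((x : H)) + snorm Q (T x - (x : H)) :=
            hQ.snorm_add_le _ _ hxD hmem2
        _ = snorm Q ((x : H)) + snorm Q ((x : H) - T x) := by
            congr 1
            have hneg : T x - (x : H) = ((-1 : ℂ)) • ((x : H) - T x) := by
              simp [neg_sub]
            rw [hneg, hQ.snorm_smul _ _ (D.sub_mem hxD hTD)]
            simp
    have hq2 : snorm Q ((x : H)) ≤ Real.sqrt M * ‖x‖ := by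
      have h1 : (Q (x : H) (x : H)).re ≤ M * ‖x‖ ^ 2 := by
        have := hM (x : H) x.2
        rwa [← Submodule.coe_norm] at this
      calc snorm Q ((x : H)) ≤ Real.sqrt (M * ‖x‖ ^ 2) := Real.sqrt_le_sqrt h1
        _ = Real.sqrt M * ‖x‖ := by
            rw [Real.sqrt_mul hM0, Real.sqrt_sq (norm_nonneg _)]
    have hq3 : snorm Q (T x) ≤ (Real.sqrt M + η) * ‖x‖ := by
      have := hqest x
      nlinarith [hq1, hq2]
    have hxle : ‖x‖ ≤ ‖T x‖ / (1 - η) := by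
      rw [le_div_iff₀ (by linarith)]
      linarith [hTlow x]
    have hq4 : snorm Q (T x) ≤ ((Real.sqrt M + η) / (1 - η)) * ‖T x‖ := by
      have hsM : 0 ≤ Real.sqrt M + η := by positivity
      calc snorm Q (T x) ≤ (Real.sqrt M + η) * ‖x‖ := hq3
        _ ≤ (Real.sqrt M + η) * (‖T x‖ / (1 - η)) :=
            mul_le_mul_of_nonneg_left hxle hsM
        _ = ((Real.sqrt M + η) / (1 - η)) * ‖T x‖ := by ring
    have hQbound : (Q (T x) (T x)).re ≤ (M + ε/2) * ‖T x‖ ^ 2 := by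
      have hsq := hQ.snorm_sq (T x) hTD
      have h0 : 0 ≤ snorm Q (T x) := Real.sqrt_nonneg _
      have hc0 : 0 ≤ ((Real.sqrt M + η) / (1 - η)) := by
        apply div_nonneg (by positivity) (by linarith)
      have h5 : snorm Q (T x) ^ 2 ≤ (((Real.sqrt M + η) / (1 - η)) * ‖T x‖) ^ 2 := by
        apply pow_le_pow_left₀ h0 hq4
      calc (Q (T x) (T x)).re = snorm Q (T x) ^ 2 := hsq.symm
        _ ≤ (((Real.sqrt M + η) / (1 - η)) * ‖T x‖) ^ 2 := h5
        _ = ((Real.sqrt M + η) / (1 - η)) ^ 2 * ‖T x‖ ^ 2 := by ring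
        _ ≤ (M + ε/2) * ‖T x‖ ^ 2 :=
            mul_le_mul_of_nonneg_right hηf.le (sq_nonneg _)
    have hPbound : t * (P (T x) (T x)).re ≤ (ε/2) * ‖T x‖ ^ 2 := by
      have h1 : (P (T x) (T x)).re ≤ CP * ‖T x‖ ^ 2 := hCPb (T x) ⟨x, rfl⟩
      have h2 : 0 ≤ (P (T x) (T x)).re := hP.nonneg _ (hL'D' ⟨x, rfl⟩)
      have h3 : t * (P (T x) (T x)).re ≤ ((ε/2)/(CP+1)) * (CP * ‖T x‖ ^ 2) := by
        apply mul_le_mul ht₀ h1 h2 (by positivity)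
      have h4 : ((ε/2)/(CP+1)) * (CP * ‖T x‖ ^ 2) ≤ (ε/2) * ‖T x‖ ^ 2 :=
        div_mul_aux (ε/2) CP (‖T x‖ ^ 2) (by linarith) hCP0 (sq_nonneg _)
      linarith
    linarith [hQbound, hPbound]

end Key


section Mono
variable {H : Type*} [NormedAddCommGroup H] [InnerProductSpace ℂ H]

lemma varEig_le_reg {Q P : H → H → ℂ} {D D' : Submodule ℂ H} (hD : D' ≤ D)
    (hP : ∀ u ∈ D', 0 ≤ (P u u).re) (t : ℝ) (ht : 0 ≤ t) (k : ℕ) :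
    varEig Q D k ≤ varEig (fun u v => Q u v + (t : ℂ) * P u v) D' k := by
  apply le_iInf₂
  intro L hL
  obtain ⟨hLD', hLk⟩ := hL
  calc varEig Q D k ≤ rayleighSup Q L := iInf₂_le L ⟨hLD'.trans hD, hLk⟩
    _ ≤ rayleighSup (fun u v => Q u v + (t : ℂ) * P u v) L := by
      apply iSup₂_mono
      rintro u ⟨huL, hu0⟩
      apply ENNReal.ofReal_le_ofReal
      have hre : ((Q u u) + (t : ℂ) * P u u).re = (Q u u).re + t * (P u u).re := by
        rw [Complex.add_re, Complex.re_ofReal_mul]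
      have hineq : (Q u u).re ≤ (Q u u).re + t * (P u u).re := by
        nlinarith [hP u (hLD' huL)]
      have hpos : (0:ℝ) < ‖u‖ ^ 2 := pow_pos (norm_pos_iff.mpr hu0) 2
      rw [hre]
      gcongr
end Mono


/-- Abstract core of Theorem 3.1 of the paper: if `D' ⊆ D` is graph-norm dense, then the
variational eigenvalues of the regularized form `Q^t = Q + tP` on `D'` converge to the
variational eigenvalues of `Q` on `D` as `t → 0⁺`. -/
theorem tendsto_varEig_regularization {H : Type*} [NormedAddCommGroup H]
    [InnerProductSpace ℂ H] [CompleteSpace H]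
    (D D' : Submodule ℂ H) (hD : D' ≤ D)
    (Q P : H → H → ℂ)
    (hQ : IsNonnegHermitianFormOn Q D) (hP : IsNonnegHermitianFormOn P D')
    (hdense : ∀ u ∈ D, ∀ ε : ℝ, 0 < ε →
      ∃ v ∈ D', ‖u - v‖ ^ 2 + (Q (u - v) (u - v)).re < ε ^ 2)
    (k : ℕ) (hk : 0 < k) :
    Filter.Tendsto (fun t : ℝ => varEig (fun u v => Q u v + (t : ℂ) * P u v) D' k)
      (nhdsWithin 0 (Set.Ioi 0)) (nhds (varEig Q D k)) := by
  rw [tendsto_order]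
  constructor
  · intro a ha
    apply eventually_nhdsWithin_of_forall
    intro t ht
    exact lt_of_lt_of_le ha (varEig_le_reg hD (fun u hu => hP.nonneg u hu) t (le_of_lt ht) k)
  · intro a ha
    have ha' : ⨅ L ∈ {L : Submodule ℂ H | L ≤ D ∧ Module.finrank ℂ ↥L = k},
        rayleighSup Q L < a := ha
    obtain ⟨L, hL⟩ := iInf_lt_iff.mp ha'
    obtain ⟨hLmem, hLlt⟩ := iInf_lt_iff.mp hL
    obtain ⟨hLD, hLk⟩ := hLmem
    haveI : FiniteDimensional ℂ ↥L := Module.finite_of_finrank_pos (by rw [hLk]; exact hk)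
    have hS_ne : rayleighSup Q L ≠ ⊤ := hLlt.ne_top
    obtain ⟨c, hSc, hca⟩ := exists_between hLlt
    have hc_ne : c ≠ ⊤ := hca.ne_top
    set M := (rayleighSup Q L).toReal with hMdef
    set A := c.toReal with hAdef
    have hMA : M < A := (ENNReal.toReal_lt_toReal hS_ne hc_ne).mpr hSc
    have hM0 : 0 ≤ M := ENNReal.toReal_nonneg
    have hM : ∀ u ∈ L, (Q u u).re ≤ M * ‖u‖ ^ 2 := by
      intro u hu
      by_cases hu0 : u = 0
      · subst hu0
        rw [hQ.zero_left 0 D.zero_mem]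
        simp
      · have h1 : ENNReal.ofReal ((Q u u).re / ‖u‖ ^ 2) ≤ rayleighSup Q L :=
          le_iSup₂ (f := fun (u : H) (_ : u ∈ {u : H | u ∈ L ∧ u ≠ 0}) =>
            ENNReal.ofReal ((Q u u).re / ‖u‖ ^ 2)) u ⟨hu, hu0⟩
        rw [← ENNReal.ofReal_toReal hS_ne, ← hMdef] at h1
        have h2 : (Q u u).re / ‖u‖ ^ 2 ≤ M := (ENNReal.ofReal_le_ofReal_iff hM0).mp h1
        have hpos : (0:ℝ) < ‖u‖ ^ 2 := pow_pos (norm_pos_iff.mpr hu0) 2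
        rw [div_le_iff₀ hpos] at h2
        exact h2
    obtain ⟨t₀, ht₀, L', hL'D', hrank', hbound⟩ :=
      key_approx hD hQ hP hdense L hLD M (A - M) hM0 (by linarith) hM
    filter_upwards [Ioo_mem_nhdsGT_of_mem (Set.left_mem_Ico.mpr ht₀)] with t htI
    calc varEig (fun u v => Q u v + (t:ℂ) * P u v) D' k
        ≤ rayleighSup (fun u v => Q u v + (t:ℂ) * P u v) L' :=
          iInf₂_le L' ⟨hL'D', by rw [hrank', hLk]⟩
      _ ≤ ENNReal.ofReal A := by
          apply iSup₂_le
          rintro u ⟨huL, hu0⟩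
          apply ENNReal.ofReal_le_ofReal
          have hpos : (0:ℝ) < ‖u‖ ^ 2 := pow_pos (norm_pos_iff.mpr hu0) 2
          show (Q u u + (t:ℂ) * P u u).re / ‖u‖ ^ 2 ≤ A
          rw [div_le_iff₀ hpos]
          have hb := hbound t htI.1 htI.2.le u huL
          have hre : ((Q u u) + (t:ℂ) * P u u).re = (Q u u).re + t * (P u u).re := by
            rw [Complex.add_re, Complex.re_ofReal_mul]
          rw [hre]
          linarith [hb]
      _ = c := ENNReal.ofReal_toReal hc_ne
      _ < a := hca
end

section
/- Let H be a complex Hilbert space, let D' ⊆ D be subspaces of H, let Q be a nonnegative Hermitian sesquilinear form with domain D, and let P be a nonnegative Hermitian sesquilinear form with domain D'. Suppose D' is dense in D with respect to the graph norm ‖u‖_Q = (‖u‖² + Q(u,u))^{1/2}. Let R : H → H satisfy R(H) ⊆ D and Q(Ru, v) + ⟨Ru, v⟩ = ⟨u, v⟩ for all u ∈ H and v ∈ D. For each t > 0 let R_t : H → H satisfy R_t(H) ⊆ D' and Q(R_t u, v) + t·P(R_t u, v) + ⟨R_t u, v⟩ = ⟨u, v⟩ for all u ∈ H and v ∈ D'.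 Then for every u ∈ H, ‖R_t u − R u‖ → 0 as t → 0⁺. -/
open scoped ComplexInnerProductSpace ENNReal

namespace IsNonnegHermitianFormOn

variable {H : Type*} [NormedAddCommGroup H] [InnerProductSpace ℂ H]
    {Q : H → H → ℂ} {D : Submodule ℂ H} (hQ : IsNonnegHermitianFormOn Q D)

include hQ in
lemma sub_left' {a b c : H} (ha : a ∈ D) (hb : b ∈ D) (hc : c ∈ D) :
    Q (a - b) c = Q a c - Q b c := by
  have h := hQ.add_left (a - b) b c (Submodule.sub_mem D ha hb) hb hc
  rw [sub_add_cancel] at h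
  linear_combination -h

include hQ in
lemma add_right' {a b c : H} (ha : a ∈ D) (hb : b ∈ D) (hc : c ∈ D) :
    Q c (a + b) = Q c a + Q c b := by
  rw [hQ.hermitian c (a + b) hc (Submodule.add_mem D ha hb),
    hQ.add_left a b c ha hb hc, map_add,
    ← hQ.hermitian c a hc ha, ← hQ.hermitian c b hc hb]

include hQ in
lemma sub_right' {a b c : H} (ha : a ∈ D) (hb : b ∈ D) (hc : c ∈ D) :
    Q c (a - b) = Q c a - Q c b := by
  rw [hQ.hermitian c (a - b) hc (Submodule.sub_mem D ha hb),
    hQ.sub_left' ha hb hc, map_sub,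
    ← hQ.hermitian c a hc ha, ← hQ.hermitian c b hc hb]

include hQ in
lemma re_add_add {a b : H} (ha : a ∈ D) (hb : b ∈ D) :
    (Q (a + b) (a + b)).re = (Q a a).re + 2 * (Q a b).re + (Q b b).re := by
  rw [hQ.add_left a b (a + b) ha hb (Submodule.add_mem D ha hb),
    hQ.add_right' ha hb ha, hQ.add_right' ha hb hb,
    hQ.hermitian b a hb ha]
  simp [Complex.add_re, Complex.conj_re]
  ring

include hQ in
lemma re_sub_sub {a b : H} (ha : a ∈ D) (hb : b ∈ D) :
    (Q (a - b) (a - b)).re = (Q a a).re - 2 * (Q a b).re + (Q b b).re := by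
  rw [hQ.sub_left' ha hb (Submodule.sub_mem D ha hb),
    hQ.sub_right' ha hb ha, hQ.sub_right' ha hb hb,
    hQ.hermitian b a hb ha]
  simp [Complex.sub_re, Complex.conj_re]
  ring

end IsNonnegHermitianFormOn

/-- Abstract strong resolvent convergence (Theorem 3.2 of the paper): if `D' ⊆ D` is
graph-norm dense, `R` is the resolvent determined by `Q(Ru,v) + ⟨Ru,v⟩ = ⟨u,v⟩` on `D`,
and `R_t` is the resolvent determined by `Q(R_t u,v) + t·P(R_t u,v) + ⟨R_t u,v⟩ = ⟨u,v⟩`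
on `D'`, then `R_t u → R u` as `t → 0⁺` for every `u`.
(Here `⟨a,b⟩`, linear in the first argument, is `⟪b, a⟫` in Mathlib's convention.) -/
theorem tendsto_resolvent_regularization {H : Type*} [NormedAddCommGroup H]
    [InnerProductSpace ℂ H] [CompleteSpace H]
    (D D' : Submodule ℂ H) (hD : D' ≤ D)
    (Q P : H → H → ℂ)
    (hQ : IsNonnegHermitianFormOn Q D) (hP : IsNonnegHermitianFormOn P D')
    (hdense : ∀ u ∈ D, ∀ ε : ℝ, 0 < ε →
      ∃ v ∈ D', ‖u - v‖ ^ 2 + (Q (u - v) (u - v)).re < ε ^ 2)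
    (R : H → H) (hRmem : ∀ u, R u ∈ D)
    (hReq : ∀ (u : H), ∀ v ∈ D, Q (R u) v + ⟪v, R u⟫ = ⟪v, u⟫)
    (Rt : ℝ → H → H) (hRtmem : ∀ t : ℝ, 0 < t → ∀ u, Rt t u ∈ D')
    (hRteq : ∀ t : ℝ, 0 < t → ∀ (u : H), ∀ v ∈ D',
      Q (Rt t u) v + (t : ℂ) * P (Rt t u) v + ⟪v, Rt t u⟫ = ⟪v, u⟫) :
    ∀ u : H, Filter.Tendsto (fun t : ℝ => ‖Rt t u - R u‖)
      (nhdsWithin 0 (Set.Ioi 0)) (nhds 0) := by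
  intro u
  rw [Metric.tendsto_nhdsWithin_nhds]
  intro ε hε
  have hwD : R u ∈ D := hRmem u
  obtain ⟨v, hvD', hv⟩ := hdense (R u) hwD (ε / 2) (by positivity)
  have hCv : 0 ≤ (P v v).re := hP.nonneg v hvD'
  refine ⟨(ε ^ 2 / 4) / ((P v v).re + 1), by positivity, ?_⟩
  intro t ht hdist
  have ht0 : 0 < t := ht
  have htlt : t < (ε ^ 2 / 4) / ((P v v).re + 1) := by
    rwa [Real.dist_eq, sub_zero, abs_of_pos ht0] at hdist
  have hvD : v ∈ D := hD hvD'
  have hwtD' : Rt t u ∈ D' := hRtmem t ht0 u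
  have hwtD : Rt t u ∈ D := hD hwtD'
  have heD : Rt t u - R u ∈ D := Submodule.sub_mem D hwtD hwD
  have hdD : R u - v ∈ D := Submodule.sub_mem D hwD hvD
  have hxD' : Rt t u - v ∈ D' := Submodule.sub_mem D' hwtD' hvD'
  have hxD : Rt t u - v ∈ D := hD hxD'
  have EA := hReq u (Rt t u - v) hxD
  have EB := hRteq t ht0 u (Rt t u - v) hxD'
  have key : Q (Rt t u - R u) (Rt t u - v) + (t : ℂ) * P (Rt t u) (Rt t u - v)
      + ⟪Rt t u - v, Rt t u - R u⟫ = 0 := by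
    rw [hQ.sub_left' hwtD hwD hxD, inner_sub_right]
    linear_combination EB - EA
  rw [hP.sub_right' hwtD' hvD' hwtD'] at key
  have hx : Rt t u - v = (Rt t u - R u) + (R u - v) := by abel
  rw [hx, hQ.add_right' heD hdD heD, inner_add_left] at key
  have keyre := congrArg Complex.re key
  simp only [Complex.add_re, Complex.sub_re, Complex.zero_re, Complex.re_ofReal_mul] at keyre
  have hnee : (⟪Rt t u - R u, Rt t u - R u⟫ : ℂ).re = ‖Rt t u - R u‖ ^ 2 := by
    simpa using inner_self_eq_norm_sq (𝕜 := ℂ) (Rt t u - R u)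
  -- inequality from nonnegativity of Q̃ on e + d
  have I1a : 0 ≤ (Q ((Rt t u - R u) + (R u - v)) ((Rt t u - R u) + (R u - v))).re :=
    hQ.nonneg _ (Submodule.add_mem D heD hdD)
  rw [hQ.re_add_add heD hdD] at I1a
  have hnorm : ‖(Rt t u - R u) + (R u - v)‖ ^ 2
      = ‖Rt t u - R u‖ ^ 2 + 2 * (⟪Rt t u - R u, R u - v⟫ : ℂ).re + ‖R u - v‖ ^ 2 := by
    exact norm_add_sq (𝕜 := ℂ) (Rt t u - R u) (R u - v)
  have hnorm0 : 0 ≤ ‖(Rt t u - R u) + (R u - v)‖ ^ 2 := sq_nonneg _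
  rw [hnorm] at hnorm0
  have hsymm : (⟪Rt t u - R u, R u - v⟫ : ℂ).re = (⟪R u - v, Rt t u - R u⟫ : ℂ).re := by
    exact inner_re_symm (𝕜 := ℂ) (Rt t u - R u) (R u - v)
  -- inequality from nonnegativity of P on wt - v
  have I2a : 0 ≤ (P (Rt t u - v) (Rt t u - v)).re := hP.nonneg _ hxD'
  rw [hP.re_sub_sub hwtD' hvD'] at I2a
  have hPwt : 0 ≤ (P (Rt t u) (Rt t u)).re := hP.nonneg _ hwtD'
  have hQe : 0 ≤ (Q (Rt t u - R u) (Rt t u - R u)).re := hQ.nonneg _ heD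
  -- combine
  have I2t : t * (2 * (P (Rt t u) v).re)
      ≤ t * ((P (Rt t u) (Rt t u)).re + (P v v).re) := by
    apply mul_le_mul_of_nonneg_left _ ht0.le
    linarith
  have hmain : ‖Rt t u - R u‖ ^ 2
      ≤ (‖R u - v‖ ^ 2 + (Q (R u - v) (R u - v)).re) + t * (P v v).re := by
    nlinarith [keyre, I1a, hnorm0, I2t, hQe, mul_nonneg ht0.le hPwt]
  have htP : t * (P v v).re < ε ^ 2 / 4 := by
    have h1 : t * (P v v).re ≤ t * ((P v v).re + 1) := by nlinarith
    have h2 : t * ((P v v).re + 1) < ε ^ 2 / 4 := by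
      rw [← lt_div_iff₀ (by positivity)]
      exact htlt
    linarith
  have hfin : ‖Rt t u - R u‖ ^ 2 < ε ^ 2 := by
    have : (ε / 2) ^ 2 = ε ^ 2 / 4 := by ring
    nlinarith
  have : ‖Rt t u - R u‖ < ε := lt_of_pow_lt_pow_left₀ 2 hε.le hfin
  simpa [Real.dist_eq, abs_of_nonneg (norm_nonneg _)] using this
end

section
/- Let H be a complex Hilbert space, let D' ⊆ D be subspaces of H, let Q be a Hermitian sesquilinear form with domain D satisfying Q(u,u) ≥ c·‖u‖² for all u ∈ D for some c > 0, and let P be a nonnegative Hermitian sesquilinear form with domain D'. Let t > 0 and C ≥ 0. Suppose N : H → H satisfies N(H) ⊆ D' and Q(Nu, v) = ⟨u, v⟩ for all u ∈ H and v ∈ D, and N_t : H → H satisfies N_t(H) ⊆ D' and Q(N_t u, v) + t·P(N_t u, v) = ⟨u, v⟩ for all u ∈ H and v ∈ D'. Suppose moreover that P(Nu, Nu) ≤ C²·‖u‖² and P(N_t u, N_t u) ≤ C²·‖u‖² for all u ∈ H. Then ‖N_t u − N u‖² ≤ (C²/c)·t·‖u‖² for every u ∈ H; in particular N_t converges to N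 in operator norm as t → 0⁺. -/
open scoped ComplexInnerProductSpace ENNReal

/-- `Q` is a Hermitian sesquilinear form with domain the subspace `D`: it is linear in the
first argument (and hence, being Hermitian, conjugate-linear in the second) and Hermitian. -/
structure IsHermitianFormOn {H : Type*} [NormedAddCommGroup H] [InnerProductSpace ℂ H]
    (Q : H → H → ℂ) (D : Submodule ℂ H) : Prop where
  add_left : ∀ u v w, u ∈ D → v ∈ D → w ∈ D → Q (u + v) w = Q u w + Q v w
  smul_left : ∀ (c : ℂ) (u v : H), u ∈ D → v ∈ D → Q (c • u) v = c * Q u v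
  hermitian : ∀ u v, u ∈ D → v ∈ D → Q u v = starRingEnd ℂ (Q v u)

section Aux

variable {H : Type*} [NormedAddCommGroup H] [InnerProductSpace ℂ H]
  {Q : H → H → ℂ} {D : Submodule ℂ H}

theorem IsHermitianFormOn.sub_left (h : IsHermitianFormOn Q D) {u v w : H}
    (hu : u ∈ D) (hv : v ∈ D) (hw : w ∈ D) : Q (u - v) w = Q u w - Q v w := by
  have e : u - v = u + (-1 : ℂ) • v := by simp [sub_eq_add_neg]
  rw [e, h.add_left u _ w hu (D.smul_mem _ hv) hw, h.smul_left (-1) v w hv hw]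
  ring

theorem IsHermitianFormOn.sub_right (h : IsHermitianFormOn Q D) {u v w : H}
    (hu : u ∈ D) (hv : v ∈ D) (hw : w ∈ D) : Q u (v - w) = Q u v - Q u w := by
  rw [h.hermitian u (v - w) hu (D.sub_mem hv hw), h.sub_left hv hw hu, map_sub,
    ← h.hermitian u v hu hv, ← h.hermitian u w hu hw]

theorem IsNonnegHermitianFormOn.toHermitian (h : IsNonnegHermitianFormOn Q D) :
    IsHermitianFormOn Q D := ⟨h.add_left, h.smul_left, h.hermitian⟩

/-- AM-GM form of Cauchy–Schwarz for a nonnegative Hermitian form. -/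
theorem IsNonnegHermitianFormOn.re_le (h : IsNonnegHermitianFormOn Q D) {u v : H}
    (hu : u ∈ D) (hv : v ∈ D) : 2 * (Q u v).re ≤ (Q u u).re + (Q v v).re := by
  have h0 : 0 ≤ (Q (u - v) (u - v)).re := h.nonneg _ (D.sub_mem hu hv)
  have e : Q (u - v) (u - v) = Q u u - Q u v - Q v u + Q v v := by
    rw [h.toHermitian.sub_left hu hv (D.sub_mem hu hv),
      h.toHermitian.sub_right hu hu hv, h.toHermitian.sub_right hv hu hv]
    ring
  have hvu : (Q v u).re = (Q u v).re := by
    rw [h.hermitian v u hv hu]; simp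
  rw [e] at h0
  simp only [Complex.add_re, Complex.sub_re] at h0
  linarith

end Aux

/-- Abstract norm resolvent convergence (Theorem 3.2 of the paper): under coercivity of `Q`
and uniform `P`-bounds on `N` and `N_t`, one has `‖N_t u − N u‖² ≤ (C²/c)·t·‖u‖²`.
(Here `⟨a,b⟩`, linear in the first argument, is `⟪b, a⟫` in Mathlib's convention.) -/
theorem sq_norm_green_sub_le {H : Type*} [NormedAddCommGroup H]
    [InnerProductSpace ℂ H] [CompleteSpace H]
    (D D' : Submodule ℂ H) (hD : D' ≤ D)
    (Q : H → H → ℂ) (hQ : IsHermitianFormOn Q D)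
    (c : ℝ) (hc : 0 < c) (hcoerc : ∀ u ∈ D, c * ‖u‖ ^ 2 ≤ (Q u u).re)
    (P : H → H → ℂ) (hP : IsNonnegHermitianFormOn P D')
    (t : ℝ) (ht : 0 < t) (C : ℝ) (hC : 0 ≤ C)
    (N : H → H) (hNmem : ∀ u, N u ∈ D')
    (hNeq : ∀ (u : H), ∀ v ∈ D, Q (N u) v = ⟪v, u⟫)
    (Nt : H → H) (hNtmem : ∀ u, Nt u ∈ D')
    (hNteq : ∀ (u : H), ∀ v ∈ D', Q (Nt u) v + (t : ℂ) * P (Nt u) v = ⟪v, u⟫)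
    (hPN : ∀ u : H, (P (N u) (N u)).re ≤ C ^ 2 * ‖u‖ ^ 2)
    (hPNt : ∀ u : H, (P (Nt u) (Nt u)).re ≤ C ^ 2 * ‖u‖ ^ 2) :
    ∀ u : H, ‖Nt u - N u‖ ^ 2 ≤ (C ^ 2 / c) * t * ‖u‖ ^ 2 := by
  intro u
  set a := Nt u with ha_def
  set b := N u with hb_def
  have ha : a ∈ D' := hNtmem u
  have hb : b ∈ D' := hNmem u
  have hw : a - b ∈ D' := D'.sub_mem ha hb
  have hP' := hP.toHermitian
  have key : Q (a - b) (a - b) = -(t : ℂ) * P a (a - b) := by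
    have h1 : Q (a - b) (a - b) = Q a (a - b) - Q b (a - b) :=
      hQ.sub_left (hD ha) (hD hb) (hD hw)
    have h2 : Q b (a - b) = ⟪a - b, u⟫ := hNeq u _ (hD hw)
    have h3 : Q a (a - b) + (t : ℂ) * P a (a - b) = ⟪a - b, u⟫ := hNteq u _ hw
    linear_combination h1 + h3 - h2
  have hre : (Q (a - b) (a - b)).re = -t * (P a (a - b)).re := by
    rw [key]; simp [Complex.mul_re]
  have hsplit : P a (a - b) = P a a - P a b := hP'.sub_right ha ha hb
  have h4 : c * ‖a - b‖ ^ 2 ≤ (Q (a - b) (a - b)).re := hcoerc _ (hD hw)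
  have h5 : 2 * (P a b).re ≤ (P a a).re + (P b b).re := hP.re_le ha hb
  have h6 : 0 ≤ (P a a).re := hP.nonneg a ha
  have h7 : (P b b).re ≤ C ^ 2 * ‖u‖ ^ 2 := hPN u
  have h8 : c * ‖a - b‖ ^ 2 ≤ t * ((P a b).re - (P a a).re) := by
    rw [hre, hsplit] at h4
    simp only [Complex.sub_re] at h4
    linarith
  rw [show C ^ 2 / c * t * ‖u‖ ^ 2 = C ^ 2 * t * ‖u‖ ^ 2 / c by ring, le_div_iff₀ hc]
  nlinarith [h8, h5, h6, h7, ht.le, sq_nonneg ‖a - b‖]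
end
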